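/- Assume μ_1 ≥ μ_2 ≥ … ≥ μ_{s_c} > 0 and λ² < (L/n_c^{L+1}) ∑_{β=1}^{s_c} μ_β². Then the system of s_c+1 equations (λ/L)(r_β/c)(n_c − 1 + exp((n_c/(n_c−1)) c r_β)) = μ_β for all β ∈ {1,…,s_c}, together with ∑_{β=1}^{s_c}(r_β/c)² = L n_c^{L−1}, has a unique solution (c, r_1, …, r_{s_c}) with all coordinates strictly positive, and this solution satisfies r_1 ≥ r_2 ≥ … ≥ r_{s_c} > 0. -/

import Mathlib

open Real Finset

lemma aux_exp_bound (x : ℝ) : -(1/2 : ℝ) ≤ (1 + x) * Real.exp x := by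
  rcases le_or_gt (-1) x with h | h
  · have := Real.exp_pos x
    nlinarith
  · have h1 : (-(1+x)) + 1 ≤ Real.exp (-(1+x)) := Real.add_one_le_exp _
    have h2 : Real.exp (-(1+x)) * Real.exp x = Real.exp (-1) := by
      rw [← Real.exp_add]; ring_nf
    have h3 : (2:ℝ) ≤ Real.exp 1 := by
      have := Real.add_one_le_exp (1:ℝ); linarith
    have h4 : Real.exp (-1) * Real.exp 1 = 1 := by
      rw [← Real.exp_add]; norm_num
    have h5 := Real.exp_pos x
    have h6 := Real.exp_pos (-(1+x))
    have h7 := Real.exp_pos (-1)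
    -- want : -(1/2) ≤ (1+x)*exp x, i.e. -(1+x)*exp x ≤ 1/2
    -- -(1+x)*exp x ≤ exp(-(1+x))*exp x - exp x = exp(-1) - exp x ≤ exp(-1) ≤ 1/2
    nlinarith

noncomputable def phiF (N θ u : ℝ) : ℝ := u * (N - 1 + Real.exp (θ * u))

lemma phiF_hasDeriv (N θ u : ℝ) :
    HasDerivAt (phiF N θ) (N - 1 + (1 + θ*u) * Real.exp (θ*u)) u := by
  have h1 : HasDerivAt (fun u : ℝ => θ * u) θ u := by
    simpa using (hasDerivAt_id u).const_mul θ
  have h2 : HasDerivAt (fun u : ℝ => Real.exp (θ*u)) (Real.exp (θ*u) * θ) u := h1.exp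
  have h3 : HasDerivAt (fun u : ℝ => N - 1 + Real.exp (θ*u)) (Real.exp (θ*u) * θ) u :=
    h2.const_add _
  have h4 : HasDerivAt (phiF N θ) (1 * (N - 1 + Real.exp (θ*u)) + id u * (Real.exp (θ*u) * θ)) u :=
    (hasDerivAt_id u).mul h3
  convert h4 using 1
  simp only [id_eq]
  ring

lemma phiF_gap (N θ : ℝ) (hN : 2 ≤ N) {v u : ℝ} (h : v ≤ u) :
    phiF N θ v + (u - v)/2 ≤ phiF N θ u := by
  set g : ℝ → ℝ := fun x => phiF N θ x - x/2 with hg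
  have hd : ∀ x, HasDerivAt g (N - 1 + (1 + θ*x) * Real.exp (θ*x) - 1/2) x := by
    intro x
    exact (phiF_hasDeriv N θ x).sub (by simpa using (hasDerivAt_id x).div_const 2)
  have mono : Monotone g := by
    apply monotone_of_deriv_nonneg
    · exact fun x => ((hd x).differentiableAt)
    · intro x
      rw [(hd x).deriv]
      nlinarith [aux_exp_bound (θ*x)]
  have := mono h
  simp only [hg] at this
  linarith

lemma phiF_strictMono (N θ : ℝ) (hN : 2 ≤ N) : StrictMono (phiF N θ) := by
  intro v u h
  have := phiF_gap N θ hN h.le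
  linarith

lemma phiF_zero (N θ : ℝ) : phiF N θ 0 = 0 := by simp [phiF]

lemma phiF_surj (N θ : ℝ) (hN : 2 ≤ N) : Function.Surjective (phiF N θ) := by
  intro m
  have hc : Continuous (phiF N θ) := by
    unfold phiF; fun_prop
  have h1 : phiF N θ (2*|m|+1) ≥ m := by
    have := phiF_gap N θ hN (show (0:ℝ) ≤ 2*|m|+1 by positivity)
    rw [phiF_zero] at this
    have := abs_nonneg m
    have := le_abs_self m
    linarith
  have h2 : phiF N θ (-(2*|m|+1)) ≤ m := by
    have := phiF_gap N θ hN (show -(2*|m|+1) ≤ (0:ℝ) by nlinarith [abs_nonneg m])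
    rw [phiF_zero] at this
    have := neg_abs_le m
    linarith
  have hsub := intermediate_value_Icc (show -(2*|m|+1) ≤ (2*|m|+1:ℝ) by nlinarith [abs_nonneg m]) hc.continuousOn
  obtain ⟨u, _, hu⟩ := hsub ⟨h2, h1⟩
  exact ⟨u, hu⟩

open Classical in
noncomputable def Uinv (N θ m : ℝ) : ℝ :=
  if h : ∃ u, phiF N θ u = m then h.choose else 0

lemma Uinv_spec (N θ m : ℝ) (hN : 2 ≤ N) : phiF N θ (Uinv N θ m) = m := by
  have h : ∃ u, phiF N θ u = m := phiF_surj N θ hN m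
  rw [Uinv, dif_pos h]
  exact h.choose_spec

lemma Uinv_eq (N θ : ℝ) (hN : 2 ≤ N) {m u : ℝ} (h : phiF N θ u = m) : Uinv N θ m = u :=
  (phiF_strictMono N θ hN).injective (by rw [Uinv_spec N θ m hN, h])

lemma Uinv_pos (N θ : ℝ) (hN : 2 ≤ N) {m : ℝ} (hm : 0 < m) : 0 < Uinv N θ m := by
  have := Uinv_spec N θ m hN
  by_contra hle
  push_neg at hle
  have := (phiF_strictMono N θ hN).monotone hle
  rw [Uinv_spec N θ m hN, phiF_zero] at this
  linarith

lemma Uinv_mono (N θ : ℝ) (hN : 2 ≤ N) {m m' : ℝ} (hm : m ≤ m') :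
    Uinv N θ m ≤ Uinv N θ m' := by
  have h := (phiF_strictMono N θ hN).le_iff_le (a := Uinv N θ m) (b := Uinv N θ m')
  rw [Uinv_spec N θ m hN, Uinv_spec N θ m' hN] at h
  exact h.mp hm

lemma Uinv_anti (N : ℝ) (hN : 2 ≤ N) {θ θ' m : ℝ} (hm : 0 < m) (hθ : θ < θ') :
    Uinv N θ' m < Uinv N θ m := by
  set u' := Uinv N θ' m with hu'
  have hu'pos : 0 < u' := Uinv_pos N θ' hN hm
  have key : phiF N θ u' < m := by
    have : Real.exp (θ * u') < Real.exp (θ' * u') :=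
      Real.exp_lt_exp.mpr (by nlinarith)
    have h2 : phiF N θ u' < phiF N θ' u' := by
      unfold phiF; nlinarith
    rw [Uinv_spec N θ' m hN] at h2
    exact h2
  have h := (phiF_strictMono N θ hN).lt_iff_lt (a := u') (b := Uinv N θ m)
  rw [Uinv_spec N θ m hN] at h
  exact h.mp key

lemma Uinv_dist (N : ℝ) (hN : 2 ≤ N) (θ m u : ℝ) :
    |Uinv N θ m - u| ≤ 2 * |phiF N θ u - m| := by
  rcases le_total u (Uinv N θ m) with h | h
  · have := phiF_gap N θ hN h
    rw [Uinv_spec N θ m hN] at this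
    rw [abs_of_nonneg (by linarith)]
    have h2 : phiF N θ u - m ≤ -((Uinv N θ m - u)/2) := by linarith
    have h3 := neg_abs_le (phiF N θ u - m)
    linarith
  · have := phiF_gap N θ hN h
    rw [Uinv_spec N θ m hN] at this
    rw [abs_of_nonpos (by linarith)]
    have h3 := le_abs_self (phiF N θ u - m)
    linarith

lemma Uinv_cont (N : ℝ) (hN : 2 ≤ N) (m : ℝ) : Continuous (fun θ => Uinv N θ m) := by
  rw [continuous_iff_continuousAt]
  intro θ₀
  set u₀ := Uinv N θ₀ m with hu₀
  have hb : ∀ θ, dist (Uinv N θ m) u₀ ≤ 2 * |phiF N θ u₀ - m| := by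
    intro θ
    rw [Real.dist_eq]
    exact Uinv_dist N hN θ m u₀
  have hgc : Continuous (fun θ => 2 * |phiF N θ u₀ - m|) := by
    unfold phiF; fun_prop
  have hg0 : (fun θ => 2 * |phiF N θ u₀ - m|) θ₀ = 0 := by
    simp only [hu₀, Uinv_spec N θ₀ m hN]
    simp
  have htend : Filter.Tendsto (fun θ => 2 * |phiF N θ u₀ - m|) (nhds θ₀) (nhds 0) := by
    rw [← hg0]
    exact hgc.tendsto θ₀
  rw [ContinuousAt, tendsto_iff_dist_tendsto_zero]
  exact squeeze_zero (fun θ => dist_nonneg) hb htend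

lemma Uinv_zero (N : ℝ) (hN : 2 ≤ N) (m : ℝ) : Uinv N 0 m = m / N := by
  apply Uinv_eq N 0 hN
  unfold phiF
  rw [zero_mul, Real.exp_zero]
  field_simp
  ring

set_option maxHeartbeats 1000000 in
theorem system_unique_solution (n_c L s_c : ℕ) (hn : 2 ≤ n_c) (hL : 1 ≤ L) (hs : 1 ≤ s_c)
    (μ : Fin s_c → ℝ) (hμpos : ∀ β, 0 < μ β)
    (hμmono : ∀ β β' : Fin s_c, β ≤ β' → μ β' ≤ μ β)
    (lam : ℝ) (hlam : 0 < lam)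
    (hbound : lam ^ 2 < ((L : ℝ) / (n_c : ℝ) ^ (L + 1)) * ∑ β, (μ β) ^ 2) :
    (∃! p : ℝ × (Fin s_c → ℝ),
      0 < p.1 ∧ (∀ β, 0 < p.2 β) ∧
      (∀ β, (lam / L) * (p.2 β / p.1) *
        ((n_c : ℝ) - 1 + Real.exp (((n_c : ℝ) / ((n_c : ℝ) - 1)) * p.1 * p.2 β)) = μ β) ∧
      (∑ β, (p.2 β / p.1) ^ 2 = (L : ℝ) * (n_c : ℝ) ^ (L - 1))) ∧
    (∀ p : ℝ × (Fin s_c → ℝ),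
      (0 < p.1 ∧ (∀ β, 0 < p.2 β) ∧
      (∀ β, (lam / L) * (p.2 β / p.1) *
        ((n_c : ℝ) - 1 + Real.exp (((n_c : ℝ) / ((n_c : ℝ) - 1)) * p.1 * p.2 β)) = μ β) ∧
      (∑ β, (p.2 β / p.1) ^ 2 = (L : ℝ) * (n_c : ℝ) ^ (L - 1))) →
      ∀ β β' : Fin s_c, β ≤ β' → p.2 β' ≤ p.2 β) := by
  classical
  haveI : Nonempty (Fin s_c) := ⟨⟨0, hs⟩⟩
  have hL0 : (0:ℝ) < L := by exact_mod_cast hL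
  have hN2 : (2:ℝ) ≤ (n_c:ℝ) := by exact_mod_cast hn
  set N : ℝ := (n_c : ℝ) with hNdef
  have hN1 : (1:ℝ) ≤ N - 1 := by linarith
  have hNpos : (0:ℝ) < N := by linarith
  set m : Fin s_c → ℝ := fun β => μ β * L / lam with hm
  have hmpos : ∀ β, 0 < m β := fun β => by
    have := hμpos β; simp only [hm]; positivity
  set T : ℝ := (L:ℝ) * N ^ (L - 1) with hT
  have hTpos : 0 < T := by positivity
  set S : ℝ → ℝ := fun θ => ∑ β, (Uinv N θ (m β))^2 with hS
  -- Claim A : any solution p determines everything through θ = N/(N-1) * p.1^2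
  have claimA : ∀ p : ℝ × (Fin s_c → ℝ),
      (0 < p.1 ∧ (∀ β, 0 < p.2 β) ∧
      (∀ β, (lam / L) * (p.2 β / p.1) *
        (N - 1 + Real.exp ((N / (N - 1)) * p.1 * p.2 β)) = μ β) ∧
      (∑ β, (p.2 β / p.1) ^ 2 = T)) →
      (∀ β, p.2 β / p.1 = Uinv N (N/(N-1) * p.1^2) (m β)) ∧
        S (N/(N-1) * p.1^2) = T := by
    rintro ⟨c, r⟩ ⟨hc, hr, heq, hsum⟩
    simp only at hc hr heq hsum ⊢
    have hc0 : c ≠ 0 := ne_of_gt hc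
    have hN10 : N - 1 ≠ 0 := by linarith
    have key : ∀ β, r β / c = Uinv N (N/(N-1) * c^2) (m β) := by
      intro β
      have harg : (N / (N - 1)) * c * r β = (N/(N-1) * c^2) * (r β / c) := by
        field_simp
      have hphi : phiF N (N/(N-1) * c^2) (r β / c) = m β := by
        unfold phiF
        rw [← harg]
        have h := heq β
        have hlam0 : lam ≠ 0 := ne_of_gt hlam
        have hL0' : (L:ℝ) ≠ 0 := ne_of_gt hL0
        simp only [hm]
        field_simp at h ⊢
        linear_combination h
      exact (Uinv_eq N _ hN2 hphi).symm
    refine ⟨key, ?_⟩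
    simp only [hS]
    rw [← hsum]
    exact (Finset.sum_congr rfl fun β _ => by rw [key β]).symm
  -- Claim B : S is strictly decreasing
  have claimB : ∀ θ θ' : ℝ, θ < θ' → S θ' < S θ := by
    intro θ θ' h
    apply Finset.sum_lt_sum_of_nonempty Finset.univ_nonempty
    intro β _
    have h1 := Uinv_anti N hN2 (hmpos β) h
    have h2 := Uinv_pos N θ' hN2 (hmpos β)
    nlinarith
  have hScont : Continuous S := by
    apply continuous_finset_sum
    intro β _
    exact (Uinv_cont N hN2 (m β)).pow 2
  -- S 0 > T
  have hS0 : T < S 0 := by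
    have hterm : ∀ β : Fin s_c, Uinv N 0 (m β) ^ 2 = μ β ^2 * ((L:ℝ)^2/(lam^2*N^2)) := by
      intro β
      rw [Uinv_zero N hN2]
      simp only [hm]
      field_simp
    have hcalc : S 0 = (∑ β, (μ β)^2) * ((L:ℝ)^2/(lam^2*N^2)) := by
      simp only [hS]
      rw [Finset.sum_congr rfl fun β _ => hterm β, ← Finset.sum_mul]
    have hNp : (0:ℝ) < N ^ (L+1) := by positivity
    have hb2 : lam^2 * N^(L+1) < (L:ℝ) * ∑ β, (μ β)^2 := by
      rw [div_mul_eq_mul_div, lt_div_iff₀ hNp] at hbound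
      linarith
    have hpow : N ^ (L+1) = N ^ (L-1) * N^2 := by
      rw [← pow_add]; congr 1; omega
    rw [hpow] at hb2
    rw [hcalc]
    simp only [hT]
    have hrw : (∑ β, (μ β)^2) * ((L:ℝ)^2/(lam^2*N^2))
        = (∑ β, (μ β)^2) * (L:ℝ)^2/(lam^2*N^2) := by ring
    rw [hrw, lt_div_iff₀ (by positivity : (0:ℝ) < lam^2*N^2)]
    have h3 := mul_lt_mul_of_pos_left hb2 hL0
    nlinarith [h3]
  -- find θ₁ with S θ₁ < T
  set ε : ℝ := Real.sqrt (T/(2*s_c)) with hε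
  have hs0 : (0:ℝ) < s_c := by exact_mod_cast hs
  have hεpos : 0 < ε := Real.sqrt_pos.mpr (by positivity)
  have hε2 : ε^2 = T/(2*s_c) := Real.sq_sqrt (by positivity)
  set β₀ : Fin s_c := ⟨0, hs⟩ with hβ₀
  have hmmax : ∀ β, m β ≤ m β₀ := by
    intro β
    have hle : β₀ ≤ β := Fin.le_def.mpr (Nat.zero_le _)
    have := hμmono β₀ β hle
    simp only [hm]
    have h1 : μ β * L ≤ μ β₀ * L := by nlinarith
    exact div_le_div_of_nonneg_right h1 hlam.le |>.trans_eq rfl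
  set θ₁ : ℝ := max 1 (Real.log (m β₀ / ε) / ε) with hθ₁
  have hθ₁0 : (0:ℝ) ≤ θ₁ := le_trans zero_le_one (le_max_left _ _)
  have hUb : ∀ β, Uinv N θ₁ (m β) ≤ ε := by
    intro β
    have h1 : Real.log (m β₀/ε) ≤ θ₁ * ε := by
      have h := le_max_right 1 (Real.log (m β₀ / ε) / ε)
      calc Real.log (m β₀/ε) = (Real.log (m β₀/ε)/ε)*ε := by field_simp
        _ ≤ θ₁ * ε := by
            apply mul_le_mul_of_nonneg_right _ hεpos.le
            exact h
    have h2 : m β₀ / ε ≤ Real.exp (θ₁*ε) := by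
      rw [← Real.exp_log (show 0 < m β₀/ε by have := hmpos β₀; positivity)]
      exact Real.exp_le_exp.mpr h1
    have h3 : m β₀ ≤ ε * Real.exp (θ₁*ε) := by
      rw [div_le_iff₀ hεpos] at h2; linarith
    have key : m β ≤ phiF N θ₁ ε := by
      unfold phiF
      have := hmmax β
      nlinarith [Real.exp_pos (θ₁*ε)]
    have h := (phiF_strictMono N θ₁ hN2).le_iff_le (a := Uinv N θ₁ (m β)) (b := ε)
    rw [Uinv_spec N θ₁ (m β) hN2] at h
    exact h.mp key
  have hSθ₁ : S θ₁ < T := by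
    have hterm2 : ∀ β : Fin s_c, Uinv N θ₁ (m β) ^ 2 ≤ T/(2*s_c) := by
      intro β
      have hp := Uinv_pos N θ₁ hN2 (hmpos β)
      have hu := hUb β
      rw [← hε2]
      exact pow_le_pow_left₀ hp.le hu 2
    have hle : S θ₁ ≤ ∑ _β : Fin s_c, T/(2*(s_c:ℝ)) := by
      simp only [hS]
      exact Finset.sum_le_sum fun β _ => hterm2 β
    rw [Finset.sum_const, Finset.card_univ, Fintype.card_fin, nsmul_eq_mul] at hle
    have heq : (s_c:ℝ) * (T/(2*(s_c:ℝ))) = T/2 := by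
      field_simp
    rw [heq] at hle
    linarith
  -- IVT
  obtain ⟨θs, hθsmem, hθseq⟩ :=
    intermediate_value_Icc' hθ₁0 hScont.continuousOn (Set.mem_Icc.mpr ⟨hSθ₁.le, hS0.le⟩)
  have hθspos : 0 < θs := by
    rcases (hθsmem.1).lt_or_eq with h | h
    · exact h
    · exfalso; rw [← h] at hθseq; linarith
  -- construct the solution
  set c : ℝ := Real.sqrt (θs * (N-1) / N) with hc
  have hcpos : 0 < c := Real.sqrt_pos.mpr (by positivity)
  have hcsq : N/(N-1) * c^2 = θs := by
    rw [hc, Real.sq_sqrt (by positivity : (0:ℝ) ≤ θs * (N-1)/N)]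
    field_simp
  set u : Fin s_c → ℝ := fun β => Uinv N θs (m β) with hu
  have hupos : ∀ β, 0 < u β := fun β => Uinv_pos N θs hN2 (hmpos β)
  have hueq : ∀ β, phiF N θs (u β) = m β := fun β => Uinv_spec N θs (m β) hN2
  have hdiv : ∀ β, c * u β / c = u β := fun β => mul_div_cancel_left₀ (u β) (ne_of_gt hcpos)
  have heqn : ∀ β, (lam / (L:ℝ)) * ((c * u β) / c) *
      (N - 1 + Real.exp ((N / (N - 1)) * c * (c * u β))) = μ β := by
    intro β
    have harg : (N / (N - 1)) * c * (c * u β) = θs * u β := by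
      have h1 : (N / (N - 1)) * c * (c * u β) = (N/(N-1) * c^2) * u β := by ring
      rw [h1, hcsq]
    rw [hdiv β, harg]
    have h2 := hueq β
    unfold phiF at h2
    rw [mul_assoc, h2]
    simp only [hm]
    field_simp
  have hconstr : ∑ β, ((c * u β) / c)^2 = T := by
    rw [Finset.sum_congr rfl fun β _ => by rw [hdiv β]]
    exact hθseq
  -- θ determined uniquely by S θ = T
  have hθuniq : ∀ θ, S θ = T → θ = θs := by
    intro θ hθ
    by_contra hne
    rcases lt_or_gt_of_ne hne with h | h
    · have := claimB θ θs h; rw [hθ, hθseq] at this; linarith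
    · have := claimB θs θ h; rw [hθ, hθseq] at this; linarith
  constructor
  · refine ⟨(c, fun β => c * u β),
      ⟨hcpos, fun β => mul_pos hcpos (hupos β), heqn, hconstr⟩, ?_⟩
    rintro q hq
    obtain ⟨hA1, hA2⟩ := claimA q hq
    obtain ⟨hq1, hq2, _, _⟩ := hq
    have hθq : N/(N-1) * q.1^2 = θs := hθuniq _ hA2
    have hq1c : q.1 = c := by
      have h2 : q.1^2 = c^2 := by
        have hN10 : N - 1 ≠ 0 := by linarith
        have := hcsq
        have hNdiv : (0:ℝ) < N/(N-1) := by positivity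
        nlinarith
      have hfac : (q.1 - c) * (q.1 + c) = 0 := by linear_combination h2
      rcases mul_eq_zero.mp hfac with h | h
      · linarith
      · linarith
    rw [Prod.ext_iff]
    refine ⟨hq1c, ?_⟩
    funext β
    have h3 := hA1 β
    rw [hθq] at h3
    show q.2 β = c * u β
    have h4 : q.2 β = q.1 * (q.2 β / q.1) := by field_simp
    rw [h4, h3, hq1c]
  · rintro q ⟨hq1, hq2, hq3, hq4⟩ β β' hle
    obtain ⟨hA1, _⟩ := claimA q ⟨hq1, hq2, hq3, hq4⟩
    have hmle : m β' ≤ m β := by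
      have := hμmono β β' hle
      simp only [hm]
      have h1 : μ β' * L ≤ μ β * L := by nlinarith
      exact div_le_div_of_nonneg_right h1 hlam.le |>.trans_eq rfl
    have hUle : Uinv N (N/(N-1) * q.1^2) (m β') ≤ Uinv N (N/(N-1) * q.1^2) (m β) :=
      Uinv_mono N _ hN2 hmle
    have e1 := hA1 β
    have e2 := hA1 β'
    have h5 : q.2 β' / q.1 ≤ q.2 β / q.1 := by rw [e1, e2]; exact hUle
    have hq10 : q.1 ≠ 0 := ne_of_gt hq1
    calc q.2 β' = q.1 * (q.2 β' / q.1) := by field_simp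
      _ ≤ q.1 * (q.2 β / q.1) := mul_le_mul_of_nonneg_left h5 hq1.le
      _ = q.2 β := by field_simp
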